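/- If θ is a nonempty shifted skew diagram that is not a rim, then B(θ,p) = 0 for every integer p. -/

import Mathlib

/-- `hcoef a b = Σ_{j=0}^{min(a,b)} (-1)^j 2^{a-j} binom(a,j)`; it is `0` when `b < 0`. -/
def hcoef (a : ℕ) (b : ℤ) : ℤ :=
  ∑ j ∈ Finset.range (a + 1),
    if (j : ℤ) ≤ b then (-1) ^ j * 2 ^ (a - j) * (a.choose j) else 0

attribute [local instance] Classical.propDecidable

/-- The south-east corners of a finite set of boxes: boxes `(i,j)` such that
neither `(i+1,j)` nor `(i,j+1)` belongs to the set. -/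
def seCorners (θ : Finset (ℤ × ℤ)) : Finset (ℤ × ℤ) :=
  θ.filter fun b => (b.1 + 1, b.2) ∉ θ ∧ (b.1, b.2 + 1) ∉ θ

/-- The south-east rim of `θ`: boxes `(i,j) ∈ θ` such that no box `(i',j') ∈ θ`
has `i' > i` and `j' > j`. -/
def seRim (θ : Finset (ℤ × ℤ)) : Finset (ℤ × ℤ) :=
  θ.filter fun b => ∀ b' ∈ θ, ¬ (b.1 < b'.1 ∧ b.2 < b'.2)

/-- `d(θ)`: the number of boxes in the south-east rim of `θ`. -/
def dRim (θ : Finset (ℤ × ℤ)) : ℕ := (seRim θ).card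

/-- `θ` is a rim if it equals its own south-east rim. -/
def IsRim (θ : Finset (ℤ × ℤ)) : Prop := θ = seRim θ

/-- Two boxes are adjacent (connected) if they share a side. -/
def Adjacent (b b' : ℤ × ℤ) : Prop := |b.1 - b'.1| + |b.2 - b'.2| = 1

/-- `b'` can be reached from `b` by a chain of adjacent boxes of `θ`. -/
def Reach (θ : Finset (ℤ × ℤ)) (b b' : ℤ × ℤ) : Prop :=
  Relation.ReflTransGen (fun x y => y ∈ θ ∧ Adjacent x y) b b'

/-- The connected components of `θ`. -/
noncomputable def comps (θ : Finset (ℤ × ℤ)) : Finset (Finset (ℤ × ℤ)) :=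
  θ.image fun b => θ.filter fun b' => Reach θ b b'

/-- `N(θ)`: the number of connected components of `θ`. -/
noncomputable def Ncomp (θ : Finset (ℤ × ℤ)) : ℕ := (comps θ).card

/-- `N⁻(θ) = max(N(θ) - 1, 0)`. -/
noncomputable def Nminus (θ : Finset (ℤ × ℤ)) : ℕ := Ncomp θ - 1

/-- `N'(θ)`: the number of connected components of `θ` containing no diagonal box. -/
noncomputable def Nprime (θ : Finset (ℤ × ℤ)) : ℕ :=
  ((comps θ).filter fun c => ∀ b ∈ c, b.1 ≠ b.2).card

/-- `B(θ,p) = Σ_S (-1)^{|S|} h(N⁻(θ∖S), d(θ∖S) - p)`, the sum over subsets `S`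
of the set of south-east corners of `θ`. -/
noncomputable def Bcoef (θ : Finset (ℤ × ℤ)) (p : ℤ) : ℤ :=
  ∑ S ∈ (seCorners θ).powerset,
    (-1) ^ S.card * hcoef (Nminus (θ \ S)) ((dRim (θ \ S) : ℤ) - p)

/-- `C(θ,p) = Σ_S (-1)^{|S|} h(N'(θ∖S), d(θ∖S) - p)`, the sum over subsets `S`
of the set of south-east corners of `θ`. -/
noncomputable def Ccoef (θ : Finset (ℤ × ℤ)) (p : ℤ) : ℤ :=
  ∑ S ∈ (seCorners θ).powerset,
    (-1) ^ S.card * hcoef (Nprime (θ \ S)) ((dRim (θ \ S) : ℤ) - p)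

/-- A strict partition with largest part at most `n`, encoded as a function
with `lam i = 0` for `i` beyond the length. -/
def IsStrictPartition (n : ℕ) (lam : ℤ → ℤ) : Prop :=
  lam 1 ≤ (n : ℤ) ∧ (∀ i : ℤ, 1 ≤ i → 0 ≤ lam i) ∧
  (∀ i : ℤ, 1 ≤ i → lam (i + 1) = 0 ∨ lam (i + 1) < lam i)

/-- The shifted Young diagram `{(i,j) : 1 ≤ i ≤ ℓ, i ≤ j ≤ λ_i + i - 1}` of a
strict partition. -/
noncomputable def shiftedD (n : ℕ) (lam : ℤ → ℤ) : Finset (ℤ × ℤ) :=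
  (Finset.Icc (1 : ℤ) (n : ℤ) ×ˢ Finset.Icc (1 : ℤ) (2 * (n : ℤ))).filter
    fun b => b.1 ≤ b.2 ∧ b.2 ≤ lam b.1 + b.1 - 1

/-- `θ` is a shifted skew diagram: `θ = ν/λ` for strict partitions `λ ⊆ ν`
with `ν_1 ≤ n`. -/
def IsShiftedSkewDiagram (n : ℕ) (θ : Finset (ℤ × ℤ)) : Prop :=
  ∃ lam nu : ℤ → ℤ, IsStrictPartition n lam ∧ IsStrictPartition n nu ∧
    (∀ i : ℤ, 1 ≤ i → lam i ≤ nu i) ∧ θ = shiftedD n nu \ shiftedD n lam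

namespace BAux

open Finset

/-! ### Generic facts about `Reach` -/

lemma adj_comm {a b : ℤ × ℤ} (h : Adjacent a b) : Adjacent b a := by
  unfold Adjacent at h ⊢
  rw [abs_sub_comm b.1, abs_sub_comm b.2]
  exact h

lemma adjH (a b b' : ℤ) (h : b = b' + 1 ∨ b' = b + 1) : Adjacent (a, b) (a, b') := by
  show |a - a| + |b - b'| = 1
  rcases h with h | h
  · have e : b - b' = 1 := by omega
    rw [sub_self, abs_zero, zero_add, e]; exact abs_one
  · have e : b - b' = -1 := by omega
    rw [sub_self, abs_zero, zero_add, e]; norm_num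

lemma adjV (a a' b : ℤ) (h : a = a' + 1 ∨ a' = a + 1) : Adjacent (a, b) (a', b) := by
  show |a - a'| + |b - b| = 1
  rcases h with h | h
  · have e : a - a' = 1 := by omega
    rw [sub_self, abs_zero, add_zero, e]; exact abs_one
  · have e : a - a' = -1 := by omega
    rw [sub_self, abs_zero, add_zero, e]; norm_num

lemma mem_of_reach {θ : Finset (ℤ × ℤ)} {a b : ℤ × ℤ} (ha : a ∈ θ) (h : Reach θ a b) :
    b ∈ θ := by
  induction h with
  | refl => exact ha
  | tail _ h2 _ => exact h2.1

lemma reach_symm {θ : Finset (ℤ × ℤ)} {a b : ℤ × ℤ} (ha : a ∈ θ) (h : Reach θ a b) :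
    Reach θ b a := by
  induction h with
  | refl => exact Relation.ReflTransGen.refl
  | @tail x y h1 h2 ih =>
      exact Relation.ReflTransGen.trans
        (Relation.ReflTransGen.single ⟨mem_of_reach ha h1, adj_comm h2.2⟩) ih

lemma reach_mono {θ ψ : Finset (ℤ × ℤ)} (hsub : θ ⊆ ψ) {a b : ℤ × ℤ}
    (h : Reach θ a b) : Reach ψ a b := by
  induction h with
  | refl => exact Relation.ReflTransGen.refl
  | tail _ h2 ih => exact Relation.ReflTransGen.tail ih ⟨hsub h2.1, h2.2⟩

lemma reach_filter_eq {θ : Finset (ℤ × ℤ)} {a b : ℤ × ℤ} (ha : a ∈ θ)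
    (h : Reach θ a b) :
    (θ.filter fun w => Reach θ a w) = θ.filter fun w => Reach θ b w := by
  ext w
  simp only [Finset.mem_filter, and_congr_right_iff]
  intro _
  constructor
  · intro hw; exact Relation.ReflTransGen.trans (reach_symm ha h) hw
  · intro hw; exact Relation.ReflTransGen.trans h hw

/-! ### Local structure around the special corner `(r+1, B)` -/

lemma nbr {θ : Finset (ℤ × ℤ)} (r B : ℤ) (h1 : ((r+2, B) : ℤ × ℤ) ∉ θ)
    (h2 : ((r+1, B+1) : ℤ × ℤ) ∉ θ) {v : ℤ × ℤ} (hv : v ∈ θ)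
    (hadj : Adjacent v (r+1, B)) : v = (r, B) ∨ v = (r+1, B-1) := by
  obtain ⟨v1, v2⟩ := v
  have hadj' : |v1 - (r+1)| + |v2 - B| = 1 := hadj
  have hcase : (v1 = r ∧ v2 = B) ∨ (v1 = r+2 ∧ v2 = B) ∨ (v1 = r+1 ∧ v2 = B-1) ∨
      (v1 = r+1 ∧ v2 = B+1) := by
    rcases abs_cases (v1 - (r+1)) with ⟨e1, e2⟩ | ⟨e1, e2⟩ <;>
      rcases abs_cases (v2 - B) with ⟨f1, f2⟩ | ⟨f1, f2⟩ <;> omega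
  rcases hcase with ⟨e, f⟩ | ⟨e, f⟩ | ⟨e, f⟩ | ⟨e, f⟩
  · left; rw [e, f]
  · exfalso; rw [e, f] at hv; exact h1 hv
  · right; rw [e, f]
  · exfalso; rw [e, f] at hv; exact h2 hv

lemma pair_ne (a b a' b' : ℤ) (h : a ≠ a' ∨ b ≠ b') : ((a, b) : ℤ × ℤ) ≠ (a', b') := by
  intro he
  rw [Prod.mk.injEq] at he
  rcases h with h | h
  · exact h he.1
  · exact h he.2

lemma reroute {θ φ : Finset (ℤ × ℤ)} (r B : ℤ) (hφ : φ ⊆ θ)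
    (h1 : ((r+2, B) : ℤ × ℤ) ∉ θ) (h2 : ((r+1, B+1) : ℤ × ℤ) ∉ θ)
    (hxφ : ((r, B-1) : ℤ × ℤ) ∈ φ) (hyφ : ((r, B) : ℤ × ℤ) ∈ φ)
    {a w : ℤ × ℤ} (haφ : a ∈ φ) (hac : a ≠ (r+1, B)) (h : Reach φ a w) :
    Reach (φ.erase (r+1, B)) a (if w = (r+1, B) then (r, B) else w) := by
  have hxc : ((r, B-1) : ℤ × ℤ) ≠ (r+1, B) := pair_ne _ _ _ _ (Or.inl (by omega))
  have hyc : ((r, B) : ℤ × ℤ) ≠ (r+1, B) := pair_ne _ _ _ _ (Or.inl (by omega))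
  have hxφ' : ((r, B-1) : ℤ × ℤ) ∈ φ.erase (r+1, B) := Finset.mem_erase.mpr ⟨hxc, hxφ⟩
  have hyφ' : ((r, B) : ℤ × ℤ) ∈ φ.erase (r+1, B) := Finset.mem_erase.mpr ⟨hyc, hyφ⟩
  -- path from (r,B) to (r+1,B-1) avoiding the corner, and back
  have hyz : ∀ u ∈ φ.erase (r+1, B), u = (r+1, B-1) →
      Reach (φ.erase (r+1, B)) (r, B) u := by
    intro u hu he
    subst he
    refine Relation.ReflTransGen.trans (Relation.ReflTransGen.single ⟨hxφ', ?_⟩)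
      (Relation.ReflTransGen.single ⟨hu, ?_⟩)
    · exact adjH r B (B-1) (Or.inl (by ring))
    · exact adjV r (r+1) (B-1) (Or.inr rfl)
  have hzy : Reach (φ.erase (r+1, B)) (r+1, B-1) (r, B) := by
    refine Relation.ReflTransGen.trans (Relation.ReflTransGen.single ⟨hxφ', ?_⟩)
      (Relation.ReflTransGen.single ⟨hyφ', ?_⟩)
    · exact adjV (r+1) r (B-1) (Or.inl rfl)
    · exact adjH r (B-1) B (Or.inr (by ring))
  induction h with
  | refl => rw [if_neg hac]; exact Relation.ReflTransGen.refl
  | @tail x w h1' h2' ih =>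
    have hxm : x ∈ φ := mem_of_reach haφ h1'
    have hwm : w ∈ φ := h2'.1
    by_cases hwc : w = (r+1, B)
    · rw [if_pos hwc]
      by_cases hxc2 : x = (r+1, B)
      · exfalso
        have hadj := h2'.2
        rw [hxc2, hwc] at hadj
        simp [Adjacent] at hadj
      · rw [if_neg hxc2] at ih
        have hadj : Adjacent x (r+1, B) := by rw [← hwc]; exact h2'.2
        rcases nbr r B h1 h2 (hφ hxm) hadj with he | he
        · rw [he] at ih; exact ih
        · exact Relation.ReflTransGen.trans ih (by rw [he]; exact hzy)
    · rw [if_neg hwc]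
      by_cases hxc2 : x = (r+1, B)
      · rw [if_pos hxc2] at ih
        have hadj : Adjacent w (r+1, B) := by rw [← hxc2]; exact adj_comm h2'.2
        rcases nbr r B h1 h2 (hφ hwm) hadj with he | he
        · rw [he]; exact ih
        · exact Relation.ReflTransGen.trans ih
            (hyz w (Finset.mem_erase.mpr ⟨hwc, hwm⟩) he)
      · rw [if_neg hxc2] at ih
        exact Relation.ReflTransGen.tail ih ⟨Finset.mem_erase.mpr ⟨hwc, hwm⟩, h2'.2⟩

lemma Ncomp_erase {θ φ : Finset (ℤ × ℤ)} (r B : ℤ) (hφ : φ ⊆ θ)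
    (h1 : ((r+2, B) : ℤ × ℤ) ∉ θ) (h2 : ((r+1, B+1) : ℤ × ℤ) ∉ θ)
    (hcφ : ((r+1, B) : ℤ × ℤ) ∈ φ)
    (hxφ : ((r, B-1) : ℤ × ℤ) ∈ φ) (hyφ : ((r, B) : ℤ × ℤ) ∈ φ) :
    Ncomp (φ.erase (r+1, B)) = Ncomp φ := by
  have hyc : ((r, B) : ℤ × ℤ) ≠ (r+1, B) := pair_ne _ _ _ _ (Or.inl (by omega))
  have hyφ' : ((r, B) : ℤ × ℤ) ∈ φ.erase (r+1, B) := Finset.mem_erase.mpr ⟨hyc, hyφ⟩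
  have hreachcy : Reach φ (r+1, B) (r, B) :=
    Relation.ReflTransGen.single ⟨hyφ, adjV (r+1) r B (Or.inl rfl)⟩
  -- transfer of reachability
  have transfer : ∀ a w : ℤ × ℤ, a ∈ φ.erase (r+1, B) → w ∈ φ.erase (r+1, B) →
      (Reach φ a w ↔ Reach (φ.erase (r+1, B)) a w) := by
    intro a w ha hw
    obtain ⟨hac, haφ⟩ := Finset.mem_erase.mp ha
    obtain ⟨hwc, hwφ⟩ := Finset.mem_erase.mp hw
    constructor
    · intro h
      have := reroute r B hφ h1 h2 hxφ hyφ haφ hac h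
      rwa [if_neg hwc] at this
    · exact reach_mono (Finset.erase_subset _ _)
  -- class description
  have hcls : ∀ a ∈ φ.erase (r+1, B),
      ((φ.erase (r+1, B)).filter fun w => Reach (φ.erase (r+1, B)) a w)
        = (φ.filter fun w => Reach φ a w).erase (r+1, B) := by
    intro a ha
    ext w
    simp only [Finset.mem_filter, Finset.mem_erase]
    constructor
    · rintro ⟨⟨hwc, hwφ⟩, hr⟩
      exact ⟨hwc, hwφ, reach_mono (Finset.erase_subset _ _) hr⟩
    · rintro ⟨hwc, hwφ, hr⟩
      have hw' : w ∈ φ.erase (r+1, B) := Finset.mem_erase.mpr ⟨hwc, hwφ⟩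
      exact ⟨⟨hwc, hwφ⟩, (transfer a w ha hw').mp hr⟩
  have hcomps : comps (φ.erase (r+1, B)) = (comps φ).image (fun C => C.erase (r+1, B)) := by
    unfold comps
    have s1 : (φ.erase (r+1, B)).image
          (fun a => (φ.erase (r+1, B)).filter fun w => Reach (φ.erase (r+1, B)) a w)
        = (φ.erase (r+1, B)).image
          (fun a => (φ.filter fun w => Reach φ a w).erase (r+1, B)) :=
      Finset.image_congr (fun a ha => hcls a ha)
    have s2 : (φ.erase (r+1, B)).image
          (fun a => (φ.filter fun w => Reach φ a w).erase (r+1, B))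
        = ((φ.erase (r+1, B)).image (fun a => φ.filter fun w => Reach φ a w)).image
          (fun C => C.erase (r+1, B)) := by
      rw [Finset.image_image]; rfl
    have s3 : (φ.erase (r+1, B)).image (fun a => φ.filter fun w => Reach φ a w)
        = φ.image (fun a => φ.filter fun w => Reach φ a w) := by
      apply Finset.Subset.antisymm
      · exact Finset.image_subset_image (Finset.erase_subset _ _)
      · intro C hC
        obtain ⟨a, ha, rfl⟩ := Finset.mem_image.mp hC
        by_cases hac : a = (r+1, B)
        · subst hac
          rw [reach_filter_eq hcφ hreachcy]
          exact Finset.mem_image_of_mem _ hyφ'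
        · exact Finset.mem_image_of_mem _ (Finset.mem_erase.mpr ⟨hac, ha⟩)
    rw [s1, s2, s3]
  unfold Ncomp
  rw [hcomps]
  apply Finset.card_image_of_injOn
  intro C1 hC1 C2 hC2 he
  obtain ⟨a1, ha1, rfl⟩ := Finset.mem_image.mp (Finset.mem_coe.mp hC1)
  obtain ⟨a2, ha2, rfl⟩ := Finset.mem_image.mp (Finset.mem_coe.mp hC2)
  by_contra hne
  have hdisj : ∀ u : ℤ × ℤ, u ∈ φ.filter (fun w => Reach φ a1 w) →
      u ∈ φ.filter (fun w => Reach φ a2 w) → False := by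
    intro u hu1 hu2
    obtain ⟨huφ, hr1⟩ := Finset.mem_filter.mp hu1
    obtain ⟨_, hr2⟩ := Finset.mem_filter.mp hu2
    exact hne (reach_filter_eq ha1
      (Relation.ReflTransGen.trans hr1 (reach_symm ha2 hr2)))
  have hex : ∃ u : ℤ × ℤ, u ∈ φ.filter (fun w => Reach φ a1 w) ∧ u ≠ (r+1, B) := by
    by_cases ha1c : a1 = (r+1, B)
    · refine ⟨(r, B), Finset.mem_filter.mpr ⟨hyφ, ?_⟩, hyc⟩
      rw [ha1c]; exact hreachcy
    · exact ⟨a1, Finset.mem_filter.mpr ⟨ha1, Relation.ReflTransGen.refl⟩, ha1c⟩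
  obtain ⟨u, hu, huc⟩ := hex
  have hu2 : u ∈ φ.filter (fun w => Reach φ a2 w) := by
    have h' : u ∈ (φ.filter (fun w => Reach φ a1 w)).erase (r+1, B) :=
      Finset.mem_erase.mpr ⟨huc, hu⟩
    dsimp only at he
    rw [he] at h'
    exact (Finset.mem_erase.mp h').2
  exact hdisj u hu hu2

lemma dRim_erase {θ φ : Finset (ℤ × ℤ)} (r B : ℤ) (hφ : φ ⊆ θ)
    (h3 : ∀ v ∈ θ, r < v.1 → B - 1 < v.2 → v = (r+1, B))
    (h4 : ((r+1, B-1) : ℤ × ℤ) ∈ θ ∨ ∀ v ∈ θ, v.1 = r → B - 1 ≤ v.2)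
    (hcφ : ((r+1, B) : ℤ × ℤ) ∈ φ)
    (hxφ : ((r, B-1) : ℤ × ℤ) ∈ φ) (hyφ : ((r, B) : ℤ × ℤ) ∈ φ)
    (hzφ : ((r+1, B-1) : ℤ × ℤ) ∈ θ → ((r+1, B-1) : ℤ × ℤ) ∈ φ) :
    dRim (φ.erase (r+1, B)) = dRim φ := by
  have hxc : ((r, B-1) : ℤ × ℤ) ≠ (r+1, B) := pair_ne _ _ _ _ (Or.inl (by omega))
  have hyc : ((r, B) : ℤ × ℤ) ≠ (r+1, B) := pair_ne _ _ _ _ (Or.inl (by omega))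
  have hzc : ((r+1, B-1) : ℤ × ℤ) ≠ (r+1, B) := pair_ne _ _ _ _ (Or.inr (by omega))
  have hrimEq : seRim (φ.erase (r+1, B)) = insert (r, B-1) ((seRim φ).erase (r+1, B)) := by
    apply Finset.Subset.antisymm
    · rintro ⟨b1, b2⟩ hb
      obtain ⟨hbφ', hno⟩ := Finset.mem_filter.mp hb
      obtain ⟨hbc, hbφ⟩ := Finset.mem_erase.mp hbφ'
      by_cases hbx : ((b1, b2) : ℤ × ℤ) = (r, B-1)
      · exact Finset.mem_insert.mpr (Or.inl hbx)
      · refine Finset.mem_insert.mpr (Or.inr (Finset.mem_erase.mpr ⟨hbc, ?_⟩))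
        refine Finset.mem_filter.mpr ⟨hbφ, ?_⟩
        intro v hv hlt
        by_cases hvc : v = (r+1, B)
        · -- the only witness is the corner; find another one
          have hb1 : b1 < r + 1 := by
            have := hlt.1; rw [hvc] at this; exact this
          have hb2 : b2 < B := by
            have := hlt.2; rw [hvc] at this; exact this
          have hbx' : ¬ (b1 = r ∧ b2 = B - 1) := by
            intro ⟨e1, e2⟩; exact hbx (by rw [e1, e2])
          rcases lt_or_eq_of_le (by omega : b1 ≤ r) with hb1r | hb1r
          · -- b1 < r
            by_cases hb2' : b2 = B - 1
            · exact hno (r, B) (Finset.mem_erase.mpr ⟨hyc, hyφ⟩)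
                ⟨(by omega : b1 < r), (by omega : b2 < B)⟩
            · exact hno (r, B-1) (Finset.mem_erase.mpr ⟨hxc, hxφ⟩)
                ⟨(by omega : b1 < r), (by omega : b2 < B - 1)⟩
          · -- b1 = r, so b2 < B - 1
            have hb2' : b2 < B - 1 := by
              rcases lt_or_eq_of_le (by omega : b2 ≤ B - 1) with h | h
              · exact h
              · exact absurd ⟨hb1r, h⟩ hbx'
            rcases h4 with hz4 | hall
            · exact hno (r+1, B-1) (Finset.mem_erase.mpr ⟨hzc, hzφ hz4⟩)
                ⟨(by omega : b1 < r + 1), hb2'⟩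
            · have := hall (b1, b2) (hφ hbφ) hb1r
              have hcon : B - 1 ≤ b2 := this
              omega
        · exact hno v (Finset.mem_erase.mpr ⟨hvc, hv⟩) hlt
    · intro b hb
      rcases Finset.mem_insert.mp hb with rfl | hb'
      · refine Finset.mem_filter.mpr ⟨Finset.mem_erase.mpr ⟨hxc, hxφ⟩, ?_⟩
        intro v hv hlt
        obtain ⟨hvc, hvφ⟩ := Finset.mem_erase.mp hv
        have h1' : r < v.1 := hlt.1
        have h2' : B - 1 < v.2 := hlt.2
        exact hvc (h3 v (hφ hvφ) h1' h2')
      · obtain ⟨hbc, hbR⟩ := Finset.mem_erase.mp hb'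
        obtain ⟨hbφ, hno⟩ := Finset.mem_filter.mp hbR
        exact Finset.mem_filter.mpr ⟨Finset.mem_erase.mpr ⟨hbc, hbφ⟩,
          fun v hv h => hno v (Finset.mem_erase.mp hv).2 h⟩
  have hcR : ((r+1, B) : ℤ × ℤ) ∈ seRim φ := by
    refine Finset.mem_filter.mpr ⟨hcφ, ?_⟩
    intro v hv hlt
    have h1' : r + 1 < v.1 := hlt.1
    have h2' : B < v.2 := hlt.2
    have := h3 v (hφ hv) (by omega) (by omega)
    rw [this] at h1'
    omega
  have hxR : ((r, B-1) : ℤ × ℤ) ∉ seRim φ := by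
    intro hmem
    exact (Finset.mem_filter.mp hmem).2 (r+1, B) hcφ
      ⟨(by omega : r < r + 1), (by omega : B - 1 < B)⟩
  unfold dRim
  rw [hrimEq, Finset.card_insert_of_notMem
    (fun hmem => hxR (Finset.mem_erase.mp hmem).2), Finset.card_erase_of_mem hcR]
  have hpos : 0 < (seRim φ).card := Finset.card_pos.mpr ⟨_, hcR⟩
  omega

/-! ### The cancellation -/

lemma cancel_main (θ : Finset (ℤ × ℤ)) (r B : ℤ)
    (hc : ((r+1, B) : ℤ × ℤ) ∈ θ) (hx : ((r, B-1) : ℤ × ℤ) ∈ θ)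
    (hy : ((r, B) : ℤ × ℤ) ∈ θ)
    (h1 : ((r+2, B) : ℤ × ℤ) ∉ θ) (h2 : ((r+1, B+1) : ℤ × ℤ) ∉ θ)
    (h3 : ∀ v ∈ θ, r < v.1 → B - 1 < v.2 → v = (r+1, B))
    (h4 : ((r+1, B-1) : ℤ × ℤ) ∈ θ ∨ ∀ v ∈ θ, v.1 = r → B - 1 ≤ v.2)
    (p : ℤ) : Bcoef θ p = 0 := by
  have hcC : ((r+1, B) : ℤ × ℤ) ∈ seCorners θ := by
    refine Finset.mem_filter.mpr ⟨hc, ?_, ?_⟩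
    · show ((r+1+1, B) : ℤ × ℤ) ∉ θ
      rw [show r + 1 + 1 = r + 2 by ring]; exact h1
    · exact h2
  have hxC : ((r, B-1) : ℤ × ℤ) ∉ seCorners θ := by
    intro h
    apply (Finset.mem_filter.mp h).2.2
    show ((r, B-1+1) : ℤ × ℤ) ∈ θ
    rw [show B - 1 + 1 = B by ring]; exact hy
  have hyC : ((r, B) : ℤ × ℤ) ∉ seCorners θ :=
    fun h => (Finset.mem_filter.mp h).2.1 hc
  have hzC : ((r+1, B-1) : ℤ × ℤ) ∉ seCorners θ := by
    intro h
    apply (Finset.mem_filter.mp h).2.2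
    show ((r+1, B-1+1) : ℤ × ℤ) ∈ θ
    rw [show B - 1 + 1 = B by ring]; exact hc
  unfold Bcoef
  rw [← Finset.insert_erase hcC,
    Finset.sum_powerset_insert (Finset.notMem_erase _ _), ← Finset.sum_add_distrib]
  apply Finset.sum_eq_zero
  intro S hS
  have hSsub : S ⊆ (seCorners θ).erase (r+1, B) := Finset.mem_powerset.mp hS
  have hScor : S ⊆ seCorners θ := hSsub.trans (Finset.erase_subset _ _)
  have hcS : ((r+1, B) : ℤ × ℤ) ∉ S := fun h => (Finset.mem_erase.mp (hSsub h)).1 rfl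
  have hsd : θ \ insert (r+1, B) S = (θ \ S).erase (r+1, B) := by
    ext u
    simp only [Finset.mem_sdiff, Finset.mem_erase, Finset.mem_insert]
    tauto
  have hφθ : θ \ S ⊆ θ := Finset.sdiff_subset
  have hcφ : ((r+1, B) : ℤ × ℤ) ∈ θ \ S := Finset.mem_sdiff.mpr ⟨hc, hcS⟩
  have hxφ : ((r, B-1) : ℤ × ℤ) ∈ θ \ S :=
    Finset.mem_sdiff.mpr ⟨hx, fun h => hxC (hScor h)⟩
  have hyφ : ((r, B) : ℤ × ℤ) ∈ θ \ S :=
    Finset.mem_sdiff.mpr ⟨hy, fun h => hyC (hScor h)⟩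
  have hzφ : ((r+1, B-1) : ℤ × ℤ) ∈ θ → ((r+1, B-1) : ℤ × ℤ) ∈ θ \ S :=
    fun h => Finset.mem_sdiff.mpr ⟨h, fun h' => hzC (hScor h')⟩
  have hd : dRim ((θ \ S).erase (r+1, B)) = dRim (θ \ S) :=
    dRim_erase r B hφθ h3 h4 hcφ hxφ hyφ hzφ
  have hN : Nminus ((θ \ S).erase (r+1, B)) = Nminus (θ \ S) := by
    unfold Nminus
    rw [Ncomp_erase r B hφθ h1 h2 hcφ hxφ hyφ]
  rw [hsd, Finset.card_insert_of_notMem hcS, hd, hN]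
  ring

/-! ### Geometry of shifted skew diagrams -/

lemma mem_skew {n : ℕ} {lam nu : ℤ → ℤ} (a b : ℤ) :
    ((a, b) : ℤ × ℤ) ∈ shiftedD n nu \ shiftedD n lam ↔
      (1 ≤ a ∧ a ≤ (n : ℤ) ∧ a ≤ b ∧ b ≤ 2 * (n : ℤ) ∧
        lam a + a ≤ b ∧ b ≤ nu a + a - 1) := by
  simp only [shiftedD, Finset.mem_sdiff, Finset.mem_filter, Finset.mem_product,
    Finset.mem_Icc, not_and]
  constructor
  · rintro ⟨⟨⟨⟨q1, q2⟩, q3, q4⟩, q5, q6⟩, q7⟩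
    have := q7 ⟨⟨q1, q2⟩, q3, q4⟩
    omega
  · rintro ⟨q1, q2, q3, q4, q5, q6⟩
    refine ⟨⟨⟨⟨q1, q2⟩, by omega, q4⟩, q3, q6⟩, ?_⟩
    intro _ h
    omega

lemma part_pos_mono {n : ℕ} {f : ℤ → ℤ} (hf : IsStrictPartition n f)
    (s t : ℤ) (hs : 1 ≤ s) (hst : s ≤ t) : 1 ≤ f t → f t + (t - s) ≤ f s := by
  obtain ⟨m, rfl⟩ : ∃ m : ℕ, t = s + m := ⟨(t - s).toNat, by omega⟩
  clear hst
  induction m with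
  | zero => intro _; simp
  | succ k ih =>
    intro h1
    have hcast : s + ((k + 1 : ℕ) : ℤ) = s + (k : ℕ) + 1 := by push_cast; ring
    rw [hcast] at h1 ⊢
    rcases hf.2.2 (s + (k : ℕ)) (by omega) with h | h
    · omega
    · have h2 : 1 ≤ f (s + (k : ℕ)) := by omega
      have := ih h2
      omega

lemma pair_step {n : ℕ} {lam nu : ℤ → ℤ} (hlam : IsStrictPartition n lam)
    (hnu : IsStrictPartition n nu) (a b a' b' : ℤ)
    (hu : ((a, b) : ℤ × ℤ) ∈ shiftedD n nu \ shiftedD n lam)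
    (hv : ((a', b') : ℤ × ℤ) ∈ shiftedD n nu \ shiftedD n lam)
    (h1 : a < a') (h2 : b < b') :
    ((a + 1, b + 1) : ℤ × ℤ) ∈ shiftedD n nu \ shiftedD n lam := by
  rw [mem_skew] at hu hv ⊢
  have hd : 1 ≤ nu a' := by omega
  have hmono := part_pos_mono hnu (a + 1) a' (by omega) (by omega) hd
  rcases hlam.2.2 a (by omega) with h | h <;> omega

lemma exists_key (n : ℕ) (θ : Finset (ℤ × ℤ)) (hθ : IsShiftedSkewDiagram n θ)
    (hrim : ¬ IsRim θ) :
    ∃ r B : ℤ, ((r+1, B) : ℤ × ℤ) ∈ θ ∧ ((r, B-1) : ℤ × ℤ) ∈ θ ∧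
      ((r, B) : ℤ × ℤ) ∈ θ ∧ ((r+2, B) : ℤ × ℤ) ∉ θ ∧ ((r+1, B+1) : ℤ × ℤ) ∉ θ ∧
      (∀ v ∈ θ, r < v.1 → B - 1 < v.2 → v = (r+1, B)) ∧
      (((r+1, B-1) : ℤ × ℤ) ∈ θ ∨ ∀ v ∈ θ, v.1 = r → B - 1 ≤ v.2) := by
  obtain ⟨lam, nu, hlam, hnu, hle, rfl⟩ := hθ
  set D := shiftedD n nu \ shiftedD n lam with hD
  -- a non-rim box exists
  have hnsub : ¬ D ⊆ seRim D := fun hsub =>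
    hrim (Finset.Subset.antisymm hsub (Finset.filter_subset _ _))
  obtain ⟨u, huD, hunr⟩ := Finset.not_subset.mp hnsub
  have hwit : ∃ v ∈ D, u.1 < v.1 ∧ u.2 < v.2 := by
    by_contra hno
    push_neg at hno
    refine hunr (Finset.mem_filter.mpr ⟨huD, ?_⟩)
    intro v hv hlt
    exact absurd hlt.2 (not_lt.mpr (hno v hv hlt.1))
  obtain ⟨v, hvD, hlt1, hlt2⟩ := hwit
  obtain ⟨u1, u2⟩ := u
  obtain ⟨v1, v2⟩ := v
  have hpair0 : ((u1 + 1, u2 + 1) : ℤ × ℤ) ∈ D :=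
    pair_step hlam hnu u1 u2 v1 v2 huD hvD hlt1 hlt2
  -- maximal row with a diagonal pair
  set P : Finset (ℤ × ℤ) := D.filter (fun w => ((w.1 + 1, w.2 + 1) : ℤ × ℤ) ∈ D) with hP
  have hPne : P.Nonempty := ⟨(u1, u2), Finset.mem_filter.mpr ⟨huD, hpair0⟩⟩
  obtain ⟨u0, hu0P, hu0max⟩ := Finset.exists_max_image P (fun w => w.1) hPne
  obtain ⟨r, j⟩ := u0
  have hu0 : ((r, j) : ℤ × ℤ) ∈ D := (Finset.mem_filter.mp hu0P).1
  have hp : ((r + 1, j + 1) : ℤ × ℤ) ∈ D := (Finset.mem_filter.mp hu0P).2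
  have hmax : ∀ a b : ℤ, ((a, b) : ℤ × ℤ) ∈ D → ((a + 1, b + 1) : ℤ × ℤ) ∈ D → a ≤ r :=
    fun a b h h' => hu0max (a, b) (Finset.mem_filter.mpr ⟨h, h'⟩)
  set B := nu (r + 1) + r with hB
  have hu0' := (mem_skew (lam := lam) (nu := nu) r j).mp hu0
  have hp' := (mem_skew (lam := lam) (nu := nu) (r + 1) (j + 1)).mp hp
  have hnu1 : 1 ≤ nu (r + 1) := by omega
  have hBn : nu (r + 1) + r ≤ (n : ℤ) := by
    have := part_pos_mono hnu 1 (r + 1) le_rfl (by omega) hnu1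
    have := hnu.1
    omega
  have hdec : nu (r + 1) + 1 ≤ nu r := by
    have := part_pos_mono hnu r (r + 1) (by omega) (by omega) hnu1
    omega
  have hc : ((r + 1, B) : ℤ × ℤ) ∈ D := (mem_skew _ _).mpr (by omega)
  have hy : ((r, B) : ℤ × ℤ) ∈ D := (mem_skew _ _).mpr (by omega)
  have hx : ((r, B - 1) : ℤ × ℤ) ∈ D := (mem_skew _ _).mpr (by omega)
  have hx' := (mem_skew (lam := lam) (nu := nu) r (B - 1)).mp hx
  have h2' : ((r + 1, B + 1) : ℤ × ℤ) ∉ D := by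
    intro h
    have := (mem_skew (lam := lam) (nu := nu) (r + 1) (B + 1)).mp h
    omega
  have hzmem : r + 2 ≤ B → ((r + 1, B - 1) : ℤ × ℤ) ∈ D := by
    intro hB2
    apply (mem_skew _ _).mpr
    rcases hlam.2.2 r (by omega) with h | h <;> omega
  have h1' : ((r + 2, B) : ℤ × ℤ) ∉ D := by
    intro h
    have hh := (mem_skew (lam := lam) (nu := nu) (r + 2) B).mp h
    have hz := hzmem (by omega)
    have hstep := pair_step hlam hnu (r + 1) (B - 1) (r + 2) B hz h (by omega) (by omega)
    have := hmax (r + 1) (B - 1) hz hstep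
    omega
  have h3' : ∀ v ∈ D, r < v.1 → B - 1 < v.2 → v = (r + 1, B) := by
    rintro ⟨a, b⟩ hv ha hb
    have ha' : r < a := ha
    have hb' : B - 1 < b := hb
    have hv' := (mem_skew (lam := lam) (nu := nu) a b).mp hv
    by_cases har : a = r + 1
    · subst har
      have : b = B := by omega
      rw [this]
    · exfalso
      have ha2 : r + 2 ≤ a := by omega
      by_cases hbB : b = B
      · subst hbB
        have hz := hzmem (by omega)
        have hstep := pair_step hlam hnu (r + 1) (B - 1) a B hz hv (by omega) (by omega)
        have := hmax (r + 1) (B - 1) hz hstep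
        omega
      · have hstep := pair_step hlam hnu (r + 1) B a b hc hv (by omega) (by omega)
        have := hmax (r + 1) B hc hstep
        omega
  have h4' : ((r + 1, B - 1) : ℤ × ℤ) ∈ D ∨ ∀ v ∈ D, v.1 = r → B - 1 ≤ v.2 := by
    by_cases hz : ((r + 1, B - 1) : ℤ × ℤ) ∈ D
    · exact Or.inl hz
    · right
      rintro ⟨a, b⟩ hv ha
      have ha' : a = r := ha
      have hv' := (mem_skew (lam := lam) (nu := nu) a b).mp hv
      by_contra hlt
      exact hz (hzmem (by omega))
  exact ⟨r, B, hc, hx, hy, h1', h2', h3', h4'⟩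

end BAux

/-- If `θ` is a nonempty shifted skew diagram that is not a rim, then
`B(θ,p) = 0` for every integer `p`. -/
theorem Bcoef_eq_zero_of_not_rim (n : ℕ) (hn : 0 < n) (θ : Finset (ℤ × ℤ))
    (hθ : IsShiftedSkewDiagram n θ) (hne : θ.Nonempty) (hrim : ¬ IsRim θ)
    (p : ℤ) : Bcoef θ p = 0 := by
  obtain ⟨r, B, hc, hx, hy, h1, h2, h3, h4⟩ := BAux.exists_key n θ hθ hrim
  exact BAux.cancel_main θ r B hc hx hy h1 h2 h3 h4 p
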